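/- (Approximation error of truncated return, expectation version) Let $(w_k)_{k\ge0}$ be i.i.d. in $\mathbb{R}^n$ with $\mathbb{E}[w_k^Tw_k] \le \sigma_0^2$ and $\mathbb{E}\|w_k\|_2 \le \mu_0$, let $P \succ 0$, $\gamma \in (0,1)$, $\|A_K\|_2 = \rho_K < 1$, $x \in \mathbb{R}^n$. Define $Y_N = \sum_{k=N}^{\infty} \gamma^{k+1} w_k^T P w_k + 2\sum_{k=N}^{\infty} \gamma^{k+1} w_k^T P A_K^{k+1} x + 2 \sum_{k=N}^{\infty} \gamma^{k+1} w_k^T P \sum_{\tau=0}^{k-1} A_K^{k-\tau} w_\tau$. Then $\mathbb{E}|Y_N| \le \gamma^N \Big( \lambda_{\max}(P) \sigma_0^2 \frac{\gamma}{1-\gamma} + 2 \mu_0 \|P\|_2 \|x\|_2 \frac{\gamma}{1-\gamma\rho_K} + 2 \mu_0^2 \|P\|_2 \frac{\gamma \rho_K}{(1-\gamma)(1-\rho_K)} \Big)$ for all $N \ge 1$. -/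

import Mathlib

open MeasureTheory ProbabilityTheory Matrix Filter
open scoped Matrix.Norms.L2Operator

section Helpers

lemma master_tsum {Ω : Type*} [MeasurableSpace Ω] (μ : Measure Ω) (f : ℕ → Ω → ℝ) (b : ℕ → ℝ)
    (hint : ∀ k, Integrable (f k) μ) (hb : ∀ k, ∫ ω, |f k ω| ∂μ ≤ b k) (hbs : Summable b) :
    Integrable (fun ω => ∑' k, f k ω) μ ∧ ∫ ω, |∑' k, f k ω| ∂μ ≤ ∑' k, b k := by
  have hb0 : ∀ k, 0 ≤ b k := fun k =>
    le_trans (integral_nonneg (fun ω => abs_nonneg _)) (hb k)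
  have hlk : ∀ k, ∫⁻ ω, ‖f k ω‖₊ ∂μ ≤ ENNReal.ofReal (b k) := by
    intro k
    have hof := ofReal_integral_norm_eq_lintegral_enorm (hint k)
    simp only [enorm_eq_nnnorm] at hof
    rw [← hof]
    exact ENNReal.ofReal_le_ofReal (by simpa [Real.norm_eq_abs] using hb k)
  have hsum_lt : ∑' k, ∫⁻ ω, ‖f k ω‖₊ ∂μ ≤ ENNReal.ofReal (∑' k, b k) := by
    rw [ENNReal.ofReal_tsum_of_nonneg hb0 hbs]
    exact ENNReal.tsum_le_tsum hlk
  have hne : ∑' k, ∫⁻ ω, ‖f k ω‖₊ ∂μ ≠ ⊤ :=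
    ne_top_of_le_ne_top ENNReal.ofReal_ne_top hsum_lt
  have haem : ∀ k, AEMeasurable (fun ω => (‖f k ω‖₊ : ENNReal)) μ :=
    fun k => (hint k).aestronglyMeasurable.enorm
  have hae_sum : ∀ᵐ ω ∂μ, Summable (fun k => (‖f k ω‖₊ : ℝ)) := by
    have hne' := hne
    rw [← lintegral_tsum haem] at hne'
    filter_upwards [ae_lt_top' (AEMeasurable.ennreal_tsum haem) hne'] with ω hω
    exact ENNReal.tsum_coe_ne_top_iff_summable_coe.mp hω.ne
  have hmeas : AEStronglyMeasurable (fun ω => ∑' k, f k ω) μ := by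
    refine aestronglyMeasurable_of_tendsto_ae atTop
      (f := fun n ω => ∑ k ∈ Finset.range n, f k ω)
      (fun n => (Finset.aestronglyMeasurable_fun_sum _ (fun k _ => (hint k).aestronglyMeasurable)))
      ?_
    filter_upwards [hae_sum] with ω hω
    exact (Summable.of_nnnorm (NNReal.summable_coe.mp hω)).hasSum.tendsto_sum_nat
  have hnn : ∀ᵐ ω ∂μ, (‖∑' k, f k ω‖₊ : ENNReal) ≤ ∑' k, (‖f k ω‖₊ : ENNReal) := by
    filter_upwards [hae_sum] with ω hω
    have hs : Summable fun k => ‖f k ω‖₊ := NNReal.summable_coe.mp hω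
    calc (‖∑' k, f k ω‖₊ : ENNReal) ≤ ((∑' k, ‖f k ω‖₊ : NNReal) : ENNReal) :=
          ENNReal.coe_le_coe.mpr (nnnorm_tsum_le hs)
      _ = _ := ENNReal.coe_tsum hs
  have hlint : ∫⁻ ω, ‖∑' k, f k ω‖₊ ∂μ ≤ ENNReal.ofReal (∑' k, b k) := by
    calc ∫⁻ ω, ‖∑' k, f k ω‖₊ ∂μ ≤ ∫⁻ ω, ∑' k, (‖f k ω‖₊ : ENNReal) ∂μ := lintegral_mono_ae hnn
      _ = ∑' k, ∫⁻ ω, ‖f k ω‖₊ ∂μ := lintegral_tsum haem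
      _ ≤ _ := hsum_lt
  have hInt : Integrable (fun ω => ∑' k, f k ω) μ :=
    ⟨hmeas, lt_of_le_of_lt hlint ENNReal.ofReal_lt_top⟩
  refine ⟨hInt, ?_⟩
  have heq : ∫ ω, |∑' k, f k ω| ∂μ = (∫⁻ ω, ‖∑' k, f k ω‖₊ ∂μ).toReal := by
    simpa [Real.norm_eq_abs, enorm_eq_nnnorm] using integral_norm_eq_lintegral_enorm hmeas
  rw [heq]
  calc (∫⁻ ω, ‖∑' k, f k ω‖₊ ∂μ).toReal ≤ (ENNReal.ofReal (∑' k, b k)).toReal :=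
        ENNReal.toReal_mono ENNReal.ofReal_ne_top hlint
    _ ≤ ∑' k, b k := by
      rw [ENNReal.toReal_ofReal (tsum_nonneg hb0)]

variable {n : ℕ}

lemma norm_sq_eq_dot (v : Fin n → ℝ) :
    ‖(EuclideanSpace.equiv (Fin n) ℝ).symm v‖ = Real.sqrt (v ⬝ᵥ v) := by
  rw [EuclideanSpace.norm_eq]
  congr 1
  simp [dotProduct, Real.norm_eq_abs, sq_abs, pow_two]

lemma dot_mulVec_le (M : Matrix (Fin n) (Fin n) ℝ) (v u : Fin n → ℝ) :
    |v ⬝ᵥ M *ᵥ u| ≤ ‖M‖ * Real.sqrt (v ⬝ᵥ v) * Real.sqrt (u ⬝ᵥ u) := by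
  set v' : EuclideanSpace ℝ (Fin n) := (EuclideanSpace.equiv (Fin n) ℝ).symm v
  set z : EuclideanSpace ℝ (Fin n) := (EuclideanSpace.equiv (Fin n) ℝ).symm (M *ᵥ u)
  have h1 : v ⬝ᵥ M *ᵥ u = inner ℝ v' z := by
    simp [v', z, PiLp.inner_apply, RCLike.inner_apply, dotProduct, mul_comm]
  have h2 : |inner ℝ v' z| ≤ ‖v'‖ * ‖z‖ := abs_real_inner_le_norm v' z
  have h3 : ‖z‖ ≤ ‖M‖ * ‖(EuclideanSpace.equiv (Fin n) ℝ).symm u‖ :=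
    M.l2_opNorm_mulVec ((EuclideanSpace.equiv (Fin n) ℝ).symm u)
  rw [h1]
  calc |inner ℝ v' z| ≤ ‖v'‖ * ‖z‖ := h2
    _ ≤ ‖v'‖ * (‖M‖ * ‖(EuclideanSpace.equiv (Fin n) ℝ).symm u‖) :=
        mul_le_mul_of_nonneg_left h3 (norm_nonneg _)
    _ = ‖M‖ * Real.sqrt (v ⬝ᵥ v) * Real.sqrt (u ⬝ᵥ u) := by
        rw [norm_sq_eq_dot, norm_sq_eq_dot]; ring

lemma quad_le_lmax (P : Matrix (Fin n) (Fin n) ℝ) (hP : P.PosDef) (v : Fin n → ℝ) :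
    v ⬝ᵥ P *ᵥ v ≤ (⨆ i, hP.1.eigenvalues i) * (v ⬝ᵥ v) := by
  set L := ⨆ i, hP.1.eigenvalues i with hL
  have hQ : Matrix.PosSemidef (L • (1 : Matrix (Fin n) (Fin n) ℝ) - P) := by
    have hU := (Matrix.mem_unitaryGroup_iff).mp (hP.1.eigenvectorUnitary).2
    have hspec := hP.1.spectral_theorem
    have heq : L • (1 : Matrix (Fin n) (Fin n) ℝ) - P
        = (hP.1.eigenvectorUnitary : Matrix (Fin n) (Fin n) ℝ)
          * Matrix.diagonal (fun i => L - hP.1.eigenvalues i)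
          * (star (hP.1.eigenvectorUnitary : Matrix (Fin n) (Fin n) ℝ)) := by
      have hdiag : Matrix.diagonal (fun i => L - hP.1.eigenvalues i)
          = L • (1 : Matrix (Fin n) (Fin n) ℝ)
            - Matrix.diagonal (RCLike.ofReal ∘ hP.1.eigenvalues) := by
        ext i j
        by_cases h : i = j <;> simp [h, Matrix.diagonal, Matrix.one_apply]
      conv_lhs => rw [hspec, ← hU]
      rw [hdiag, Matrix.mul_sub, Matrix.sub_mul, mul_smul_comm, smul_mul_assoc, mul_one,
        mul_assoc, Unitary.conjStarAlgAut_apply, mul_assoc]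
    rw [heq]
    have hd : Matrix.PosSemidef (Matrix.diagonal (fun i => L - hP.1.eigenvalues i)) :=
      Matrix.posSemidef_diagonal_iff.mpr
        (fun i => sub_nonneg.2 (le_ciSup (Finite.bddAbove_range _) i))
    simpa [Matrix.star_eq_conjTranspose] using hd.mul_mul_conjTranspose_same _
  have h0 := hQ.dotProduct_mulVec_nonneg v
  simp only [star_trivial, Matrix.sub_mulVec, dotProduct_sub, Matrix.smul_mulVec,
    Matrix.one_mulVec, dotProduct_smul, smul_eq_mul, sub_nonneg] at h0
  exact h0

lemma measurable_dot {Ω : Type*} [MeasurableSpace Ω] {v u : Ω → Fin n → ℝ}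
    (hv : Measurable v) (hu : Measurable u) : Measurable fun ω => v ω ⬝ᵥ u ω := by
  simp only [dotProduct]
  exact Finset.measurable_sum _ fun i _ =>
    ((measurable_pi_apply i).comp hv).mul ((measurable_pi_apply i).comp hu)

lemma measurable_mulVecFn {Ω : Type*} [MeasurableSpace Ω] (M : Matrix (Fin n) (Fin n) ℝ)
    {v : Ω → Fin n → ℝ} (hv : Measurable v) : Measurable fun ω => M *ᵥ v ω := by
  apply measurable_pi_lambda
  intro i
  simp only [Matrix.mulVec, dotProduct]
  exact Finset.measurable_sum _ fun j _ =>
    measurable_const.mul ((measurable_pi_apply j).comp hv)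

lemma sqrt_le_one_add {a : ℝ} (ha : 0 ≤ a) : Real.sqrt a ≤ 1 + a := by
  nlinarith [Real.sq_sqrt ha, Real.sqrt_nonneg a]

lemma dot_self_nonneg (v : Fin n → ℝ) : 0 ≤ v ⬝ᵥ v :=
  Finset.sum_nonneg fun i _ => mul_self_nonneg _

lemma dot_mulVec_finset_sum {ι : Type*} (v : Fin n → ℝ) (M : Matrix (Fin n) (Fin n) ℝ)
    (s : Finset ι) (u : ι → Fin n → ℝ) :
    v ⬝ᵥ M *ᵥ (∑ τ ∈ s, u τ) = ∑ τ ∈ s, v ⬝ᵥ M *ᵥ u τ := by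
  classical
  induction s using Finset.induction_on with
  | empty => simp
  | insert _ _ ha ih =>
    rw [Finset.sum_insert ha, Finset.sum_insert ha, Matrix.mulVec_add, dotProduct_add, ih]

end Helpers
/-- Expectation bound for the truncation tail `Y_N` of the random return:
`E|Y_N| ≤ γ^N ( λ_max(P) σ₀² γ/(1-γ) + 2 μ₀ ‖P‖₂ ‖x‖₂ γ/(1-γρ)
              + 2 μ₀² ‖P‖₂ γρ/((1-γ)(1-ρ)) )` for all `N ≥ 1`. -/
theorem stmt_12 {Ω : Type*} [MeasurableSpace Ω] (μ : Measure Ω) [IsProbabilityMeasure μ]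
    {n : ℕ} (P A : Matrix (Fin n) (Fin n) ℝ) (hP : P.PosDef)
    (ρ : ℝ) (hρ : ‖A‖ = ρ) (hρ1 : ρ < 1)
    (γ σ0 μ0 : ℝ) (hγ0 : 0 < γ) (hγ1 : γ < 1) (x : Fin n → ℝ)
    (w : ℕ → Ω → (Fin n → ℝ)) (hwm : ∀ t, Measurable (w t))
    (hindep : iIndepFun w μ)
    (hid : ∀ s t, IdentDistrib (w s) (w t) μ μ)
    (hmom2 : ∀ t, Integrable (fun ω => w t ω ⬝ᵥ w t ω) μ)
    (hσ : ∀ t, ∫ ω, w t ω ⬝ᵥ w t ω ∂μ ≤ σ0 ^ 2)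
    (hμ0 : ∀ t, ∫ ω, Real.sqrt (w t ω ⬝ᵥ w t ω) ∂μ ≤ μ0) :
    ∀ N : ℕ, 1 ≤ N →
      ∀ Y : Ω → ℝ,
        Y = (fun ω =>
          (∑' k : ℕ, γ ^ (k + N + 1) * (w (k + N) ω ⬝ᵥ P *ᵥ w (k + N) ω))
          + 2 * (∑' k : ℕ, γ ^ (k + N + 1) *
              (w (k + N) ω ⬝ᵥ (P * A ^ (k + N + 1)) *ᵥ x))
          + 2 * (∑' k : ℕ, γ ^ (k + N + 1) *
              (w (k + N) ω ⬝ᵥ P *ᵥ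
                ∑ τ ∈ Finset.range (k + N), (A ^ (k + N - τ)) *ᵥ w τ ω))) →
        Integrable Y μ ∧
        ∫ ω, |Y ω| ∂μ ≤ γ ^ N *
          ((⨆ i, hP.1.eigenvalues i) * σ0 ^ 2 * (γ / (1 - γ))
            + 2 * μ0 * ‖P‖ * Real.sqrt (x ⬝ᵥ x) * (γ / (1 - γ * ρ))
            + 2 * μ0 ^ 2 * ‖P‖ * (γ * ρ / ((1 - γ) * (1 - ρ)))) := by
  intro N hN Y hY
  subst hY
  -- basic constants
  set L := ⨆ i, hP.1.eigenvalues i with hLdef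
  have hρ0 : 0 ≤ ρ := hρ ▸ norm_nonneg A
  have h1γ : 0 < 1 - γ := by linarith
  have h1ρ : 0 < 1 - ρ := by linarith
  have hγρ0 : 0 ≤ γ * ρ := mul_nonneg hγ0.le hρ0
  have hγρ1 : γ * ρ < 1 := by nlinarith
  have h1γρ : 0 < 1 - γ * ρ := by linarith
  have hL0 : 0 ≤ L := by
    rcases isEmpty_or_nonempty (Fin n) with h | h
    · simp [hLdef, Real.iSup_of_isEmpty]
    · obtain ⟨i⟩ := h
      exact le_trans (hP.posSemidef.eigenvalues_nonneg i)
        (le_ciSup (Finite.bddAbove_range _) i)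
  have hμ00 : 0 ≤ μ0 :=
    le_trans (integral_nonneg fun ω => Real.sqrt_nonneg _) (hμ0 0)
  have hP0 : (0:ℝ) ≤ ‖P‖ := norm_nonneg _
  have hx0 : 0 ≤ Real.sqrt (x ⬝ᵥ x) := Real.sqrt_nonneg _
  have hAk : ∀ k : ℕ, 0 < k → ‖A ^ k‖ ≤ ρ ^ k := fun k hk => by
    calc ‖A ^ k‖ ≤ ‖A‖ ^ k := norm_pow_le' A hk
      _ = ρ ^ k := by rw [hρ]
  have hPAk : ∀ k : ℕ, 0 < k → ‖P * A ^ k‖ ≤ ‖P‖ * ρ ^ k := fun k hk =>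
    le_trans (norm_mul_le _ _) (mul_le_mul_of_nonneg_left (hAk k hk) hP0)
  -- sqrt moments
  set nw : ℕ → Ω → ℝ := fun t ω => Real.sqrt (w t ω ⬝ᵥ w t ω) with hnw
  have hnw_meas : ∀ t, Measurable (nw t) := fun t => (measurable_dot (hwm t) (hwm t)).sqrt
  have hnw_nonneg : ∀ t ω, 0 ≤ nw t ω := fun t ω => Real.sqrt_nonneg _
  have hnw_int : ∀ t, Integrable (nw t) μ := fun t =>
    Integrable.mono' ((integrable_const 1).add (hmom2 t)) (hnw_meas t).aestronglyMeasurable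
      (ae_of_all _ fun ω => by
        rw [Real.norm_eq_abs, abs_of_nonneg (Real.sqrt_nonneg _)]
        exact sqrt_le_one_add (dot_self_nonneg _))
  have hnwE0 : ∀ t, 0 ≤ ∫ ω, nw t ω ∂μ := fun t =>
    integral_nonneg fun ω => Real.sqrt_nonneg _
  -- the "geometric + master" helper
  have key : ∀ (f : ℕ → Ω → ℝ) (C r : ℝ), 0 ≤ r → r < 1 → (∀ k, Integrable (f k) μ) →
      (∀ k, ∫ ω, |f k ω| ∂μ ≤ C * r ^ k) →
      Integrable (fun ω => ∑' k, f k ω) μ ∧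
        ∫ ω, |∑' k, f k ω| ∂μ ≤ C * (1 - r)⁻¹ := by
    intro f C r hr0 hr1 hint hb
    have h := master_tsum μ f (fun k => C * r ^ k) hint hb
      ((summable_geometric_of_lt_one hr0 hr1).mul_left C)
    rwa [tsum_mul_left, tsum_geometric_of_lt_one hr0 hr1] at h
  ---- Family 1
  have hq_meas : ∀ t, Measurable fun ω => w t ω ⬝ᵥ P *ᵥ w t ω := fun t =>
    measurable_dot (hwm t) (measurable_mulVecFn P (hwm t))
  have hq_nonneg : ∀ t ω, 0 ≤ w t ω ⬝ᵥ P *ᵥ w t ω := fun t ω => by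
    simpa using hP.posSemidef.dotProduct_mulVec_nonneg (w t ω)
  have hq_int : ∀ t, Integrable (fun ω => w t ω ⬝ᵥ P *ᵥ w t ω) μ := fun t =>
    Integrable.mono' ((hmom2 t).const_mul L) (hq_meas t).aestronglyMeasurable
      (ae_of_all _ fun ω => by
        rw [Real.norm_eq_abs, abs_of_nonneg (hq_nonneg t ω)]
        exact quad_le_lmax P hP _)
  have hqE : ∀ t, ∫ ω, w t ω ⬝ᵥ P *ᵥ w t ω ∂μ ≤ L * σ0 ^ 2 := fun t => by
    calc ∫ ω, w t ω ⬝ᵥ P *ᵥ w t ω ∂μ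
        ≤ ∫ ω, L * (w t ω ⬝ᵥ w t ω) ∂μ :=
          integral_mono (hq_int t) ((hmom2 t).const_mul L)
            (fun ω => quad_le_lmax P hP _)
      _ = L * ∫ ω, w t ω ⬝ᵥ w t ω ∂μ := integral_const_mul L _
      _ ≤ L * σ0 ^ 2 := mul_le_mul_of_nonneg_left (hσ t) hL0
  have h1 := key (fun k ω => γ ^ (k + N + 1) * (w (k + N) ω ⬝ᵥ P *ᵥ w (k + N) ω))
    (γ ^ (N + 1) * (L * σ0 ^ 2)) γ hγ0.le hγ1
    (fun k => ((hq_int (k + N)).const_mul _))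
    (fun k => by
      have habs : ∀ ω, |γ ^ (k + N + 1) * (w (k + N) ω ⬝ᵥ P *ᵥ w (k + N) ω)|
          = γ ^ (k + N + 1) * (w (k + N) ω ⬝ᵥ P *ᵥ w (k + N) ω) := fun ω =>
        abs_of_nonneg (mul_nonneg (pow_nonneg hγ0.le _) (hq_nonneg _ ω))
      calc ∫ ω, |γ ^ (k + N + 1) * (w (k + N) ω ⬝ᵥ P *ᵥ w (k + N) ω)| ∂μ
          = γ ^ (k + N + 1) * ∫ ω, w (k + N) ω ⬝ᵥ P *ᵥ w (k + N) ω ∂μ := by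
            simp_rw [habs]; exact integral_const_mul _ _
        _ ≤ γ ^ (k + N + 1) * (L * σ0 ^ 2) :=
            mul_le_mul_of_nonneg_left (hqE _) (pow_nonneg hγ0.le _)
        _ = γ ^ (N + 1) * (L * σ0 ^ 2) * γ ^ k := by rw [pow_add, pow_add]; ring)
  ---- Family 2
  have hf2_meas : ∀ k : ℕ, Measurable fun ω =>
      γ ^ (k + N + 1) * (w (k + N) ω ⬝ᵥ (P * A ^ (k + N + 1)) *ᵥ x) := fun k =>
    (measurable_dot (hwm (k + N)) measurable_const).const_mul _
  have hf2_bound : ∀ (k : ℕ) (ω : Ω),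
      |γ ^ (k + N + 1) * (w (k + N) ω ⬝ᵥ (P * A ^ (k + N + 1)) *ᵥ x)|
        ≤ (γ ^ (k + N + 1) * (‖P‖ * ρ ^ (k + N + 1) * Real.sqrt (x ⬝ᵥ x))) * nw (k + N) ω := by
    intro k ω
    rw [abs_mul, abs_of_nonneg (pow_nonneg hγ0.le _)]
    have h := dot_mulVec_le (P * A ^ (k + N + 1)) (w (k + N) ω) x
    have h2 : ‖P * A ^ (k + N + 1)‖ * nw (k + N) ω * Real.sqrt (x ⬝ᵥ x)
        ≤ ‖P‖ * ρ ^ (k + N + 1) * nw (k + N) ω * Real.sqrt (x ⬝ᵥ x) := by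
      have := hPAk (k + N + 1) (by omega)
      have hnn : 0 ≤ nw (k + N) ω * Real.sqrt (x ⬝ᵥ x) :=
        mul_nonneg (hnw_nonneg _ _) hx0
      nlinarith
    calc γ ^ (k + N + 1) * |w (k + N) ω ⬝ᵥ (P * A ^ (k + N + 1)) *ᵥ x|
        ≤ γ ^ (k + N + 1) * (‖P * A ^ (k + N + 1)‖ * nw (k + N) ω * Real.sqrt (x ⬝ᵥ x)) :=
          mul_le_mul_of_nonneg_left h (pow_nonneg hγ0.le _)
      _ ≤ γ ^ (k + N + 1) * (‖P‖ * ρ ^ (k + N + 1) * nw (k + N) ω * Real.sqrt (x ⬝ᵥ x)) :=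
          mul_le_mul_of_nonneg_left h2 (pow_nonneg hγ0.le _)
      _ = (γ ^ (k + N + 1) * (‖P‖ * ρ ^ (k + N + 1) * Real.sqrt (x ⬝ᵥ x))) * nw (k + N) ω := by
          ring
  have hf2_int : ∀ k : ℕ, Integrable (fun ω =>
      γ ^ (k + N + 1) * (w (k + N) ω ⬝ᵥ (P * A ^ (k + N + 1)) *ᵥ x)) μ := fun k =>
    Integrable.mono' ((hnw_int (k + N)).const_mul _) (hf2_meas k).aestronglyMeasurable
      (ae_of_all _ fun ω => by
        rw [Real.norm_eq_abs]; exact hf2_bound k ω)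
  have h2 := key (fun k ω => γ ^ (k + N + 1) * (w (k + N) ω ⬝ᵥ (P * A ^ (k + N + 1)) *ᵥ x))
    (γ ^ (N + 1) * ρ ^ (N + 1) * (‖P‖ * μ0 * Real.sqrt (x ⬝ᵥ x))) (γ * ρ) hγρ0 hγρ1
    hf2_int
    (fun k => by
      have hC : 0 ≤ γ ^ (k + N + 1) * (‖P‖ * ρ ^ (k + N + 1) * Real.sqrt (x ⬝ᵥ x)) := by
        positivity
      calc ∫ ω, |γ ^ (k + N + 1) * (w (k + N) ω ⬝ᵥ (P * A ^ (k + N + 1)) *ᵥ x)| ∂μ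
          ≤ ∫ ω, (γ ^ (k + N + 1) * (‖P‖ * ρ ^ (k + N + 1) * Real.sqrt (x ⬝ᵥ x)))
              * nw (k + N) ω ∂μ :=
            integral_mono (hf2_int k).abs ((hnw_int (k + N)).const_mul _)
              (fun ω => hf2_bound k ω)
        _ = (γ ^ (k + N + 1) * (‖P‖ * ρ ^ (k + N + 1) * Real.sqrt (x ⬝ᵥ x)))
              * ∫ ω, nw (k + N) ω ∂μ := integral_const_mul _ _
        _ ≤ (γ ^ (k + N + 1) * (‖P‖ * ρ ^ (k + N + 1) * Real.sqrt (x ⬝ᵥ x))) * μ0 :=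
            mul_le_mul_of_nonneg_left (hμ0 (k + N)) hC
        _ = γ ^ (N + 1) * ρ ^ (N + 1) * (‖P‖ * μ0 * Real.sqrt (x ⬝ᵥ x)) * (γ * ρ) ^ k := by
            rw [pow_add, pow_add, pow_add, pow_add, mul_pow]; ring)
  ---- Family 3
  have hgeo : ∀ m : ℕ, ∑ τ ∈ Finset.range m, ρ ^ (m - τ) ≤ ρ * (1 - ρ)⁻¹ := by
    intro m
    have step : ∀ τ ∈ Finset.range m, ρ ^ (m - τ) = ρ * ρ ^ (m - 1 - τ) := by
      intro τ hτ
      rw [Finset.mem_range] at hτ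
      rw [← pow_succ']
      congr 1
      omega
    rw [Finset.sum_congr rfl step, ← Finset.mul_sum]
    have : ∑ τ ∈ Finset.range m, ρ ^ (m - 1 - τ) = ∑ τ ∈ Finset.range m, ρ ^ τ :=
      Finset.sum_range_reflect (fun j => ρ ^ j) m
    rw [this]
    refine mul_le_mul_of_nonneg_left ?_ hρ0
    calc ∑ τ ∈ Finset.range m, ρ ^ τ ≤ ∑' τ : ℕ, ρ ^ τ :=
          Summable.sum_le_tsum _ (fun τ _ => pow_nonneg hρ0 _)
            (summable_geometric_of_lt_one hρ0 hρ1)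
      _ = (1 - ρ)⁻¹ := tsum_geometric_of_lt_one hρ0 hρ1
  -- expectation of products
  have hprod_int : ∀ s t : ℕ, s ≠ t → Integrable (fun ω => nw s ω * nw t ω) μ := by
    intro s t hst
    have hφ : Measurable fun v : Fin n → ℝ => Real.sqrt (v ⬝ᵥ v) :=
      (measurable_dot measurable_id measurable_id).sqrt
    have hind : IndepFun (nw s) (nw t) μ := (hindep.indepFun hst).comp hφ hφ
    exact hind.integrable_mul (hnw_int s) (hnw_int t)
  have hprodE : ∀ s t : ℕ, s ≠ t → ∫ ω, nw s ω * nw t ω ∂μ ≤ μ0 ^ 2 := by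
    intro s t hst
    have hφ : Measurable fun v : Fin n → ℝ => Real.sqrt (v ⬝ᵥ v) :=
      (measurable_dot measurable_id measurable_id).sqrt
    have hind : IndepFun (nw s) (nw t) μ := (hindep.indepFun hst).comp hφ hφ
    have heq : ∫ ω, nw s ω * nw t ω ∂μ = (∫ ω, nw s ω ∂μ) * ∫ ω, nw t ω ∂μ :=
      hind.integral_fun_mul_eq_mul_integral (hnw_int s).aestronglyMeasurable (hnw_int t).aestronglyMeasurable
    rw [heq, sq]
    exact mul_le_mul (hμ0 s) (hμ0 t) (hnwE0 t) hμ00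
  -- pointwise bound for family 3
  have hf3_bound : ∀ (k : ℕ) (ω : Ω),
      |γ ^ (k + N + 1) * (w (k + N) ω ⬝ᵥ P *ᵥ
          ∑ τ ∈ Finset.range (k + N), (A ^ (k + N - τ)) *ᵥ w τ ω)|
        ≤ γ ^ (k + N + 1) * ∑ τ ∈ Finset.range (k + N),
            (‖P‖ * ρ ^ (k + N - τ)) * (nw (k + N) ω * nw τ ω) := by
    intro k ω
    rw [abs_mul, abs_of_nonneg (pow_nonneg hγ0.le _)]
    refine mul_le_mul_of_nonneg_left ?_ (pow_nonneg hγ0.le _)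
    rw [dot_mulVec_finset_sum]
    refine le_trans (Finset.abs_sum_le_sum_abs _ _) (Finset.sum_le_sum ?_)
    intro τ hτ
    rw [Finset.mem_range] at hτ
    have hpos : 0 < k + N - τ := by omega
    have h := dot_mulVec_le (P * A ^ (k + N - τ)) (w (k + N) ω) (w τ ω)
    have hPA := hPAk (k + N - τ) hpos
    have hmv : w (k + N) ω ⬝ᵥ P *ᵥ ((A ^ (k + N - τ)) *ᵥ w τ ω)
        = w (k + N) ω ⬝ᵥ (P * A ^ (k + N - τ)) *ᵥ w τ ω := by
      rw [Matrix.mulVec_mulVec]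
    rw [hmv]
    have hnn : 0 ≤ nw (k + N) ω * nw τ ω := mul_nonneg (hnw_nonneg _ _) (hnw_nonneg _ _)
    calc |w (k + N) ω ⬝ᵥ (P * A ^ (k + N - τ)) *ᵥ w τ ω|
        ≤ ‖P * A ^ (k + N - τ)‖ * nw (k + N) ω * nw τ ω := h
      _ ≤ (‖P‖ * ρ ^ (k + N - τ)) * (nw (k + N) ω * nw τ ω) := by nlinarith
  have hf3_int : ∀ k : ℕ, Integrable (fun ω =>
      γ ^ (k + N + 1) * (w (k + N) ω ⬝ᵥ P *ᵥ
        ∑ τ ∈ Finset.range (k + N), (A ^ (k + N - τ)) *ᵥ w τ ω)) μ := by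
    intro k
    have hgmeas : Measurable fun ω =>
        γ ^ (k + N + 1) * (w (k + N) ω ⬝ᵥ P *ᵥ
          ∑ τ ∈ Finset.range (k + N), (A ^ (k + N - τ)) *ᵥ w τ ω) := by
      refine Measurable.const_mul ?_ _
      refine measurable_dot (hwm (k + N)) (measurable_mulVecFn P ?_)
      exact Finset.measurable_sum _ fun τ _ => measurable_mulVecFn _ (hwm τ)
    have hgint : Integrable (fun ω => γ ^ (k + N + 1) * ∑ τ ∈ Finset.range (k + N),
        (‖P‖ * ρ ^ (k + N - τ)) * (nw (k + N) ω * nw τ ω)) μ := by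
      refine Integrable.const_mul ?_ _
      refine integrable_finset_sum _ fun τ hτ => ?_
      rw [Finset.mem_range] at hτ
      exact (hprod_int (k + N) τ (by omega)).const_mul _
    exact Integrable.mono' hgint hgmeas.aestronglyMeasurable
      (ae_of_all _ fun ω => by rw [Real.norm_eq_abs]; exact hf3_bound k ω)
  have h3 := key (fun k ω => γ ^ (k + N + 1) * (w (k + N) ω ⬝ᵥ P *ᵥ
      ∑ τ ∈ Finset.range (k + N), (A ^ (k + N - τ)) *ᵥ w τ ω))
    (γ ^ (N + 1) * (‖P‖ * μ0 ^ 2 * (ρ * (1 - ρ)⁻¹))) γ hγ0.le hγ1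
    hf3_int
    (fun k => by
      have hgint : Integrable (fun ω => γ ^ (k + N + 1) * ∑ τ ∈ Finset.range (k + N),
          (‖P‖ * ρ ^ (k + N - τ)) * (nw (k + N) ω * nw τ ω)) μ := by
        refine Integrable.const_mul ?_ _
        refine integrable_finset_sum _ fun τ hτ => ?_
        rw [Finset.mem_range] at hτ
        exact (hprod_int (k + N) τ (by omega)).const_mul _
      calc ∫ ω, |γ ^ (k + N + 1) * (w (k + N) ω ⬝ᵥ P *ᵥ
              ∑ τ ∈ Finset.range (k + N), (A ^ (k + N - τ)) *ᵥ w τ ω)| ∂μ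
          ≤ ∫ ω, γ ^ (k + N + 1) * ∑ τ ∈ Finset.range (k + N),
              (‖P‖ * ρ ^ (k + N - τ)) * (nw (k + N) ω * nw τ ω) ∂μ :=
            integral_mono (hf3_int k).abs hgint (fun ω => hf3_bound k ω)
        _ = γ ^ (k + N + 1) * ∑ τ ∈ Finset.range (k + N),
              (‖P‖ * ρ ^ (k + N - τ)) * ∫ ω, nw (k + N) ω * nw τ ω ∂μ := by
            rw [integral_const_mul]
            congr 1
            rw [integral_finset_sum _ (fun τ hτ => by
              rw [Finset.mem_range] at hτ
              exact (hprod_int (k + N) τ (by omega)).const_mul _)]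
            exact Finset.sum_congr rfl fun τ _ => integral_const_mul _ _
        _ ≤ γ ^ (k + N + 1) * ∑ τ ∈ Finset.range (k + N),
              (‖P‖ * ρ ^ (k + N - τ)) * μ0 ^ 2 := by
            refine mul_le_mul_of_nonneg_left (Finset.sum_le_sum fun τ hτ => ?_)
              (pow_nonneg hγ0.le _)
            rw [Finset.mem_range] at hτ
            exact mul_le_mul_of_nonneg_left (hprodE (k + N) τ (by omega))
              (by positivity)
        _ = γ ^ (k + N + 1) * (‖P‖ * μ0 ^ 2
              * ∑ τ ∈ Finset.range (k + N), ρ ^ (k + N - τ)) := by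
            simp only [Finset.mul_sum]
            exact Finset.sum_congr rfl fun τ _ => by ring
        _ ≤ γ ^ (k + N + 1) * (‖P‖ * μ0 ^ 2 * (ρ * (1 - ρ)⁻¹)) := by
            refine mul_le_mul_of_nonneg_left ?_ (pow_nonneg hγ0.le _)
            exact mul_le_mul_of_nonneg_left (hgeo (k + N)) (by positivity)
        _ = γ ^ (N + 1) * (‖P‖ * μ0 ^ 2 * (ρ * (1 - ρ)⁻¹)) * γ ^ k := by
            rw [pow_add, pow_add]; ring)
  ---- assemble
  obtain ⟨hI1, hB1⟩ := h1
  obtain ⟨hI2, hB2⟩ := h2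
  obtain ⟨hI3, hB3⟩ := h3
  have hYint : Integrable (fun ω =>
      (∑' k : ℕ, γ ^ (k + N + 1) * (w (k + N) ω ⬝ᵥ P *ᵥ w (k + N) ω))
      + 2 * (∑' k : ℕ, γ ^ (k + N + 1) * (w (k + N) ω ⬝ᵥ (P * A ^ (k + N + 1)) *ᵥ x))
      + 2 * (∑' k : ℕ, γ ^ (k + N + 1) * (w (k + N) ω ⬝ᵥ P *ᵥ
          ∑ τ ∈ Finset.range (k + N), (A ^ (k + N - τ)) *ᵥ w τ ω))) μ :=
    (hI1.add (hI2.const_mul 2)).add (hI3.const_mul 2)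
  refine ⟨hYint, ?_⟩
  set T1 : Ω → ℝ := fun ω => ∑' k : ℕ, γ ^ (k + N + 1) * (w (k + N) ω ⬝ᵥ P *ᵥ w (k + N) ω)
  set T2 : Ω → ℝ := fun ω =>
    ∑' k : ℕ, γ ^ (k + N + 1) * (w (k + N) ω ⬝ᵥ (P * A ^ (k + N + 1)) *ᵥ x)
  set T3 : Ω → ℝ := fun ω => ∑' k : ℕ, γ ^ (k + N + 1) * (w (k + N) ω ⬝ᵥ P *ᵥ
    ∑ τ ∈ Finset.range (k + N), (A ^ (k + N - τ)) *ᵥ w τ ω)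
  have habs : ∀ ω, |T1 ω + 2 * T2 ω + 2 * T3 ω| ≤ |T1 ω| + 2 * |T2 ω| + 2 * |T3 ω| := by
    intro ω
    calc |T1 ω + 2 * T2 ω + 2 * T3 ω| ≤ |T1 ω + 2 * T2 ω| + |2 * T3 ω| := abs_add_le _ _
      _ ≤ |T1 ω| + |2 * T2 ω| + |2 * T3 ω| := by
          have := abs_add_le (T1 ω) (2 * T2 ω); linarith [abs_nonneg (2 * T3 ω)]
      _ = |T1 ω| + 2 * |T2 ω| + 2 * |T3 ω| := by
          rw [abs_mul, abs_mul]; norm_num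
  have hstep : ∫ ω, |T1 ω + 2 * T2 ω + 2 * T3 ω| ∂μ
      ≤ ∫ ω, (|T1 ω| + 2 * |T2 ω| + 2 * |T3 ω|) ∂μ :=
    integral_mono hYint.abs
      ((hI1.abs.add ((hI2.abs.const_mul 2))).add (hI3.abs.const_mul 2))
      habs
  have hsplit : ∫ ω, (|T1 ω| + 2 * |T2 ω| + 2 * |T3 ω|) ∂μ
      = ∫ ω, |T1 ω| ∂μ + 2 * ∫ ω, |T2 ω| ∂μ + 2 * ∫ ω, |T3 ω| ∂μ := by
    have hI2' : Integrable (fun ω => 2 * |T2 ω|) μ := hI2.abs.const_mul 2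
    have hI3' : Integrable (fun ω => 2 * |T3 ω|) μ := hI3.abs.const_mul 2
    have hI12 : Integrable (fun ω => |T1 ω| + 2 * |T2 ω|) μ := hI1.abs.add hI2'
    rw [integral_add hI12 hI3', integral_add hI1.abs hI2', integral_const_mul, integral_const_mul]
  -- final arithmetic
  have e1 : γ ^ (N + 1) * (L * σ0 ^ 2) * (1 - γ)⁻¹ = γ ^ N * (L * σ0 ^ 2 * (γ / (1 - γ))) := by
    rw [pow_succ, div_eq_mul_inv]; ring
  have e2 : 2 * (γ ^ (N + 1) * ρ ^ (N + 1) * (‖P‖ * μ0 * Real.sqrt (x ⬝ᵥ x)) * (1 - γ * ρ)⁻¹)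
      ≤ γ ^ N * (2 * μ0 * ‖P‖ * Real.sqrt (x ⬝ᵥ x) * (γ / (1 - γ * ρ))) := by
    have hle : ρ ^ (N + 1) ≤ 1 := pow_le_one₀ hρ0 hρ1.le
    have hC : 0 ≤ 2 * γ ^ (N + 1) * (‖P‖ * μ0 * Real.sqrt (x ⬝ᵥ x)) * (1 - γ * ρ)⁻¹ := by
      positivity
    calc 2 * (γ ^ (N + 1) * ρ ^ (N + 1) * (‖P‖ * μ0 * Real.sqrt (x ⬝ᵥ x)) * (1 - γ * ρ)⁻¹)
        = (2 * γ ^ (N + 1) * (‖P‖ * μ0 * Real.sqrt (x ⬝ᵥ x)) * (1 - γ * ρ)⁻¹) * ρ ^ (N + 1) := by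
          ring
      _ ≤ (2 * γ ^ (N + 1) * (‖P‖ * μ0 * Real.sqrt (x ⬝ᵥ x)) * (1 - γ * ρ)⁻¹) * 1 :=
          mul_le_mul_of_nonneg_left hle hC
      _ = γ ^ N * (2 * μ0 * ‖P‖ * Real.sqrt (x ⬝ᵥ x) * (γ / (1 - γ * ρ))) := by
          rw [pow_succ, div_eq_mul_inv]; ring
  have e3 : 2 * (γ ^ (N + 1) * (‖P‖ * μ0 ^ 2 * (ρ * (1 - ρ)⁻¹)) * (1 - γ)⁻¹)
      = γ ^ N * (2 * μ0 ^ 2 * ‖P‖ * (γ * ρ / ((1 - γ) * (1 - ρ)))) := by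
    rw [pow_succ, div_eq_mul_inv, mul_inv]; ring
  calc ∫ ω, |T1 ω + 2 * T2 ω + 2 * T3 ω| ∂μ
      ≤ ∫ ω, |T1 ω| ∂μ + 2 * ∫ ω, |T2 ω| ∂μ + 2 * ∫ ω, |T3 ω| ∂μ := by
        rw [← hsplit]; exact hstep
    _ ≤ γ ^ (N + 1) * (L * σ0 ^ 2) * (1 - γ)⁻¹
        + 2 * (γ ^ (N + 1) * ρ ^ (N + 1) * (‖P‖ * μ0 * Real.sqrt (x ⬝ᵥ x)) * (1 - γ * ρ)⁻¹)
        + 2 * (γ ^ (N + 1) * (‖P‖ * μ0 ^ 2 * (ρ * (1 - ρ)⁻¹)) * (1 - γ)⁻¹) := by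
        have b2' : 2 * ∫ ω, |T2 ω| ∂μ
            ≤ 2 * (γ ^ (N + 1) * ρ ^ (N + 1) * (‖P‖ * μ0 * Real.sqrt (x ⬝ᵥ x))
              * (1 - γ * ρ)⁻¹) := by linarith
        have b3' : 2 * ∫ ω, |T3 ω| ∂μ
            ≤ 2 * (γ ^ (N + 1) * (‖P‖ * μ0 ^ 2 * (ρ * (1 - ρ)⁻¹)) * (1 - γ)⁻¹) := by linarith
        linarith
    _ ≤ γ ^ N * (L * σ0 ^ 2 * (γ / (1 - γ))
        + 2 * μ0 * ‖P‖ * Real.sqrt (x ⬝ᵥ x) * (γ / (1 - γ * ρ))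
        + 2 * μ0 ^ 2 * ‖P‖ * (γ * ρ / ((1 - γ) * (1 - ρ)))) := by
        rw [mul_add, mul_add]
        have := e1; have := e2; have := e3
        linarith
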